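/- arXiv:1506.04257 — 3 statements merged into one kernel-verified Lean document; each statement's English description precedes it below -/
import Mathlib

section
/- (Sanov upper bound) For any set S of empirical distributions of p samples over n categories and any full-support distribution Q, the probability that p i.i.d. samples from Q have empirical distribution in S is at most (p+1)^n exp(-p · min_{P̂ ∈ S} D(P̂||Q)). -/
open scoped Classical

/-- `P` is a probability mass function on `n` categories. -/
def isPMF {n : ℕ} (P : Fin n → ℝ) : Prop :=
  (∀ i, 0 ≤ P i) ∧ ∑ i, P i = 1

/-- Kullback–Leibler divergence `D(P‖Q) = ∑ i, P i * log (P i / Q i)`. -/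
noncomputable def KL {n : ℕ} (P Q : Fin n → ℝ) : ℝ :=
  ∑ i, P i * Real.log (P i / Q i)

/-- Empirical distribution (type) of the sequence `x` of `p` samples over `n` categories. -/
noncomputable def emp {n p : ℕ} (x : Fin p → Fin n) (i : Fin n) : ℝ :=
  ((Finset.univ.filter (fun j => x j = i)).card : ℝ) / p

/-- Probability of observing the sequence `x` under `p` i.i.d. draws from `Q`. -/
noncomputable def seqProb {n p : ℕ} (Q : Fin n → ℝ) (x : Fin p → Fin n) : ℝ :=
  ∏ j, Q (x j)

/-- Probability, under `p` i.i.d. draws from `Q`, that the empirical distribution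
equals `P` exactly. -/
noncomputable def typeProb (p : ℕ) {n : ℕ} (Q : Fin n → ℝ) (P : Fin n → ℝ) : ℝ :=
  ∑ x : Fin p → Fin n, if emp x = P then seqProb Q x else 0

/-- Probability, under `p` i.i.d. draws from `Q`, that the empirical distribution
lies in the set `S`. -/
noncomputable def setProb (p : ℕ) {n : ℕ} (Q : Fin n → ℝ) (S : Set (Fin n → ℝ)) : ℝ :=
  ∑ x : Fin p → Fin n, if emp x ∈ S then seqProb Q x else 0

/-- The count of category `i` in the sequence `x`. -/
noncomputable def cnt {n p : ℕ} (x : Fin p → Fin n) (i : Fin n) : ℕ :=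
  (Finset.univ.filter (fun j => x j = i)).card

lemma emp_eq_cnt {n p : ℕ} (x : Fin p → Fin n) (i : Fin n) :
    emp x i = (cnt x i : ℝ) / p := rfl

lemma cnt_le {n p : ℕ} (x : Fin p → Fin n) (i : Fin n) : cnt x i ≤ p := by
  simpa [cnt] using Finset.card_filter_le Finset.univ (fun j => x j = i)

lemma sum_cnt {n p : ℕ} (x : Fin p → Fin n) : ∑ i, cnt x i = p := by
  classical
  have := Finset.card_eq_sum_card_fiberwise
    (f := x) (s := (Finset.univ : Finset (Fin p))) (t := (Finset.univ : Finset (Fin n)))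
    (fun a _ => Finset.mem_univ _)
  simpa [cnt] using this.symm

lemma emp_nonneg {n p : ℕ} (x : Fin p → Fin n) (i : Fin n) : 0 ≤ emp x i := by
  unfold emp; positivity

lemma emp_isPMF {n p : ℕ} (hp : 0 < p) (x : Fin p → Fin n) : isPMF (emp x) := by
  refine ⟨emp_nonneg x, ?_⟩
  have hp' : (p : ℝ) ≠ 0 := by positivity
  rw [show (fun i => emp x i) = fun i => (cnt x i : ℝ) / p from rfl]
  rw [← Finset.sum_div]
  rw [show (∑ i, (cnt x i : ℝ)) = ((∑ i, cnt x i : ℕ) : ℝ) by push_cast; ring]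
  rw [sum_cnt]
  exact div_self hp'

lemma seqProb_eq_prod_pow {n p : ℕ} (f : Fin n → ℝ) (x : Fin p → Fin n) :
    seqProb f x = ∏ i, f i ^ cnt x i := by
  classical
  rw [seqProb, ← Finset.prod_fiberwise' Finset.univ x f]
  simp [cnt]

lemma seqProb_nonneg {n p : ℕ} {f : Fin n → ℝ} (hf : ∀ i, 0 ≤ f i)
    (x : Fin p → Fin n) : 0 ≤ seqProb f x :=
  Finset.prod_nonneg fun j _ => hf (x j)

lemma sum_seqProb {n p : ℕ} {f : Fin n → ℝ} (hf : ∑ i, f i = 1) :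
    ∑ x : Fin p → Fin n, seqProb f x = 1 := by
  classical
  simp only [seqProb]
  rw [← Fintype.sum_pow f p, hf, one_pow]

/-- Key identity: the probability of a sequence under `Q` in terms of its type. -/
lemma seqProb_eq_exp {n p : ℕ} (hp : 0 < p) (Q : Fin n → ℝ) (hQpos : ∀ i, 0 < Q i)
    (x : Fin p → Fin n) :
    seqProb Q x = Real.exp (-(p : ℝ) * KL (emp x) Q) * seqProb (emp x) x := by
  have hp' : (p : ℝ) ≠ 0 := by positivity
  have hKL : -(p : ℝ) * KL (emp x) Q
      = ∑ i, -((cnt x i : ℝ) * Real.log (emp x i / Q i)) := by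
    rw [KL, Finset.mul_sum]
    refine Finset.sum_congr rfl fun i _ => ?_
    rw [emp_eq_cnt]
    field_simp
  rw [hKL, Real.exp_sum, seqProb_eq_prod_pow, seqProb_eq_prod_pow, ← Finset.prod_mul_distrib]
  refine Finset.prod_congr rfl fun i _ => ?_
  rcases Nat.eq_zero_or_pos (cnt x i) with h0 | hpos
  · simp [h0]
  · have hPi : 0 < emp x i := by
      rw [emp_eq_cnt]
      positivity
    have hlog : Real.log (emp x i / Q i) = Real.log (emp x i) - Real.log (Q i) :=
      Real.log_div (ne_of_gt hPi) (ne_of_gt (hQpos i))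
    have e1 : Real.exp ((cnt x i : ℝ) * Real.log (Q i)) = Q i ^ cnt x i := by
      rw [Real.exp_nat_mul, Real.exp_log (hQpos i)]
    have e2 : Real.exp ((cnt x i : ℝ) * Real.log (emp x i)) = emp x i ^ cnt x i := by
      rw [Real.exp_nat_mul, Real.exp_log hPi]
    rw [hlog]
    rw [show -((cnt x i : ℝ) * (Real.log (emp x i) - Real.log (Q i)))
        = (cnt x i : ℝ) * Real.log (Q i) - (cnt x i : ℝ) * Real.log (emp x i) by ring]
    rw [Real.exp_sub, e1, e2, div_mul_cancel₀ _ (pow_ne_zero _ (ne_of_gt hPi))]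

lemma typeProb_le {n p : ℕ} (hp : 0 < p) (Q : Fin n → ℝ) (hQpos : ∀ i, 0 < Q i)
    (P : Fin n → ℝ) (x₀ : Fin p → Fin n) (hx₀ : emp x₀ = P) :
    typeProb p Q P ≤ Real.exp (-(p : ℝ) * KL P Q) := by
  have hPpmf : isPMF P := hx₀ ▸ emp_isPMF hp x₀
  calc typeProb p Q P
      = ∑ x : Fin p → Fin n,
          if emp x = P then Real.exp (-(p : ℝ) * KL P Q) * seqProb P x else 0 := by
        refine Finset.sum_congr rfl fun x _ => ?_
        split_ifs with h
        · rw [seqProb_eq_exp hp Q hQpos x, h]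
        · rfl
    _ ≤ ∑ x : Fin p → Fin n, Real.exp (-(p : ℝ) * KL P Q) * seqProb P x := by
        refine Finset.sum_le_sum fun x _ => ?_
        split_ifs with h
        · exact le_refl _
        · exact mul_nonneg (Real.exp_nonneg _) (seqProb_nonneg hPpmf.1 x)
    _ = Real.exp (-(p : ℝ) * KL P Q) := by
        rw [← Finset.mul_sum, sum_seqProb hPpmf.2, mul_one]

lemma card_types_le {n p : ℕ} (hp : 0 < p) (S : Finset (Fin n → ℝ))
    (htype : ∀ P ∈ S, ∃ x : Fin p → Fin n, emp x = P) :
    S.card ≤ (p + 1) ^ n := by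
  classical
  have hkey : ∀ P ∈ S, ∀ i, P i = ((min p ⌊(p : ℝ) * P i⌋₊ : ℕ) : ℝ) / p := by
    intro P hP i
    obtain ⟨x, hx⟩ := htype P hP
    have h1 : (p : ℝ) * P i = (cnt x i : ℝ) := by
      rw [← hx, emp_eq_cnt]
      field_simp
    have h2 : ⌊(p : ℝ) * P i⌋₊ = cnt x i := by rw [h1, Nat.floor_natCast]
    rw [h2, min_eq_right (cnt_le x i), ← emp_eq_cnt, hx]
  have hinj : Set.InjOn
      (fun P : Fin n → ℝ => fun i : Fin n =>
        (⟨min p ⌊(p : ℝ) * P i⌋₊, Nat.lt_succ_of_le (min_le_left _ _)⟩ : Fin (p + 1)))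
      ↑S := by
    intro P₁ h₁ P₂ h₂ h
    funext i
    have := congrFun h i
    simp only [Fin.mk.injEq] at this
    rw [hkey P₁ h₁ i, hkey P₂ h₂ i, this]
  calc S.card ≤ Fintype.card (Fin n → Fin (p + 1)) := by
        have := Finset.card_le_card_of_injOn
          (f := fun P : Fin n → ℝ => fun i : Fin n =>
            (⟨min p ⌊(p : ℝ) * P i⌋₊, Nat.lt_succ_of_le (min_le_left _ _)⟩ : Fin (p + 1)))
          (fun P _ => Finset.mem_univ _) hinj
        simpa using this
    _ = (p + 1) ^ n := by simp [Fintype.card_fun]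

theorem sanov_upper_bound {n p : ℕ} (Q : Fin n → ℝ) (S : Finset (Fin n → ℝ))
    (hp : 0 < p) (hQ : isPMF Q) (hQpos : ∀ i, 0 < Q i) (hS : S.Nonempty)
    (htype : ∀ P ∈ S, ∃ x : Fin p → Fin n, emp x = P) :
    setProb p Q ↑S ≤
      ((p : ℝ) + 1) ^ n * Real.exp (-(p : ℝ) * S.inf' hS (fun P => KL P Q)) := by
  classical
  have hsplit : setProb p Q ↑S = ∑ P ∈ S, typeProb p Q P := by
    rw [setProb]
    simp only [typeProb]
    rw [Finset.sum_comm]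
    refine Finset.sum_congr rfl fun x _ => ?_
    rw [Finset.sum_ite_eq S (emp x) (fun _ => seqProb Q x)]
    simp
  set m := S.inf' hS (fun P => KL P Q) with hm
  have hexp : ∀ P ∈ S, Real.exp (-(p : ℝ) * KL P Q) ≤ Real.exp (-(p : ℝ) * m) := by
    intro P hP
    apply Real.exp_le_exp.mpr
    have : m ≤ KL P Q := Finset.inf'_le _ hP
    have hp0 : (0:ℝ) ≤ p := Nat.cast_nonneg p
    nlinarith
  calc setProb p Q ↑S = ∑ P ∈ S, typeProb p Q P := hsplit
    _ ≤ ∑ P ∈ S, Real.exp (-(p : ℝ) * m) := by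
        refine Finset.sum_le_sum fun P hP => ?_
        obtain ⟨x, hx⟩ := htype P hP
        exact le_trans (typeProb_le hp Q hQpos P x hx) (hexp P hP)
    _ = (S.card : ℝ) * Real.exp (-(p : ℝ) * m) := by
        rw [Finset.sum_const, nsmul_eq_mul]
    _ ≤ ((p : ℝ) + 1) ^ n * Real.exp (-(p : ℝ) * m) := by
        apply mul_le_mul_of_nonneg_right _ (Real.exp_nonneg _)
        have h := card_types_le hp S htype
        calc (S.card : ℝ) ≤ (((p + 1) ^ n : ℕ) : ℝ) := Nat.cast_le.mpr h
          _ = ((p : ℝ) + 1) ^ n := by push_cast; ring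
end

section
/- (Closed-form solution) Let P̂, Q be distributions on n categories with Q full support, and suppose the ratios P̂_i/Q_i have a unique minimizer at index ℓ, with second-smallest ratio P̂_k/Q_k. For α ∈ [1 − P̂_ℓ − (P̂_k/Q_k)(1 − Q_ℓ), κ(P̂||Q)], the distribution P* defined by P*_ℓ = P̂_ℓ/(1−α) and P*_i = Q_i(1 − P̂_ℓ/(1−α))/(1 − Q_ℓ) for i ≠ ℓ is the unique minimizer of D(P||Q) over {P ∈ S^n : P_i ≤ P̂_i/(1−α) for all i}. -/
/-- Separation distance `κ(P‖Q) = max_i (1 - P i / Q i)`. -/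
noncomputable def sepDist {n : ℕ} [NeZero n] (P Q : Fin n → ℝ) : ℝ :=
  Finset.univ.sup' Finset.univ_nonempty (fun i => 1 - P i / Q i)

/-- `D*_α`: the minimum of `D(P‖Q)` over the probability distributions `P` with
`P i ≤ P̂ i / (1 - α)` for all `i`. -/
noncomputable def Dstar {n : ℕ} (Phat Q : Fin n → ℝ) (α : ℝ) : ℝ :=
  sInf ((fun P => KL P Q) '' {P : Fin n → ℝ | isPMF P ∧ ∀ i, P i ≤ Phat i / (1 - α)})

lemma gibbs_aux {n : ℕ} (P R : Fin n → ℝ) (hP : isPMF P) (hR : isPMF R)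
    (hsupp : ∀ i, R i = 0 → P i = 0) :
    0 ≤ KL P R ∧ (KL P R = 0 → P = R) := by
  have key : ∀ i : Fin n, P i - R i ≤ P i * Real.log (P i / R i) := by
    intro i
    rcases eq_or_lt_of_le (hP.1 i) with h0 | hpos
    · simp [← h0]
      exact hR.1 i
    · have hRpos : 0 < R i := by
        rcases eq_or_lt_of_le (hR.1 i) with h0 | h
        · exact absurd (hsupp i h0.symm) (ne_of_gt hpos)
        · exact h
      have hlog : Real.log (R i / P i) ≤ R i / P i - 1 :=
        Real.log_le_sub_one_of_pos (div_pos hRpos hpos)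
      have hneg : Real.log (P i / R i) = -Real.log (R i / P i) := by
        rw [← Real.log_inv, inv_div]
      have hmul : P i * (R i / P i) = R i := by field_simp
      nlinarith
  have keq : ∀ i : Fin n, P i * Real.log (P i / R i) = P i - R i → P i = R i := by
    intro i heq
    rcases eq_or_lt_of_le (hP.1 i) with h0 | hpos
    · simp [← h0] at heq ⊢
      linarith
    · have hRpos : 0 < R i := by
        rcases eq_or_lt_of_le (hR.1 i) with h0 | h
        · exact absurd (hsupp i h0.symm) (ne_of_gt hpos)
        · exact h
      by_contra hne
      have hne1 : R i / P i ≠ 1 := by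
        intro h
        exact hne ((div_eq_one_iff_eq (ne_of_gt hpos)).mp h).symm
      have hlog : Real.log (R i / P i) < R i / P i - 1 :=
        Real.log_lt_sub_one_of_pos (div_pos hRpos hpos) hne1
      have hneg : Real.log (P i / R i) = -Real.log (R i / P i) := by
        rw [← Real.log_inv, inv_div]
      have hmul : P i * (R i / P i) = R i := by field_simp
      nlinarith
  have hsum : ∑ i, (P i - R i) = 0 := by
    rw [Finset.sum_sub_distrib, hP.2, hR.2]; ring
  constructor
  · have := Finset.sum_le_sum (fun i (_ : i ∈ Finset.univ) => key i)
    rw [hsum] at this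
    exact this
  · intro hKL
    have hEq : ∀ i ∈ Finset.univ, (P i - R i) = P i * Real.log (P i / R i) :=
      (Finset.sum_eq_sum_iff_of_le (fun i _ => key i)).mp (by rw [hsum, ← hKL]; rfl)
    funext i
    exact keq i ((hEq i (Finset.mem_univ i)).symm)

theorem closed_form_solution {n : ℕ} [NeZero n] (Phat Q : Fin n → ℝ) (α : ℝ)
    (ℓ k : Fin n)
    (hP : isPMF Phat) (hQ : isPMF Q) (hQpos : ∀ i, 0 < Q i)
    (hQl1 : Q ℓ < 1) (hkl : k ≠ ℓ)
    (hratio : Phat ℓ / Q ℓ < Phat k / Q k)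
    (hsecond : ∀ i, i ≠ ℓ → Phat k / Q k ≤ Phat i / Q i)
    (hαlb : 1 - Phat ℓ - (Phat k / Q k) * (1 - Q ℓ) ≤ α)
    (hαub : α ≤ sepDist Phat Q) (hα1 : α < 1) :
    let Pstar : Fin n → ℝ := fun i =>
      if i = ℓ then Phat ℓ / (1 - α)
      else Q i * (1 - Phat ℓ / (1 - α)) / (1 - Q ℓ)
    (isPMF Pstar ∧ ∀ i, Pstar i ≤ Phat i / (1 - α)) ∧
      ∀ P : Fin n → ℝ, isPMF P → (∀ i, P i ≤ Phat i / (1 - α)) →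
        KL Pstar Q ≤ KL P Q ∧ (KL P Q = KL Pstar Q → P = Pstar) := by
  intro Pstar
  have h1α : (0:ℝ) < 1 - α := by linarith
  set t : ℝ := Phat ℓ / (1 - α) with ht_def
  have hPsl : Pstar ℓ = t := by simp [Pstar]; rfl
  have hPsne : ∀ i, i ≠ ℓ → Pstar i = Q i * (1 - t) / (1 - Q ℓ) := by
    intro i hi; simp [Pstar, hi]; rfl
  have hQl0 : 0 < Q ℓ := hQpos ℓ
  have hQl1' : (0:ℝ) < 1 - Q ℓ := by linarith
  have ht0 : 0 ≤ t := div_nonneg (hP.1 ℓ) (le_of_lt h1α)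
  have hsep : sepDist Phat Q ≤ 1 - Phat ℓ / Q ℓ := by
    apply Finset.sup'_le
    intro i _
    rcases eq_or_ne i ℓ with rfl | hne
    · exact le_rfl
    · have := hsecond i hne
      linarith [hratio]
  have hακ : α ≤ 1 - Phat ℓ / Q ℓ := le_trans hαub hsep
  have hPl_le : Phat ℓ ≤ (1 - α) * Q ℓ := by
    have h1 : Phat ℓ / Q ℓ ≤ 1 - α := by linarith
    have := (div_le_iff₀ hQl0).mp h1
    linarith
  have htQ : t ≤ Q ℓ := by
    rw [ht_def, div_le_iff₀ h1α]
    nlinarith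
  have ht1 : t < 1 := lt_of_le_of_lt htQ hQl1
  have ht1' : (0:ℝ) < 1 - t := by linarith
  have htα : t * (1 - α) = Phat ℓ := by
    rw [ht_def]; field_simp
  have hQsum : ∑ i ∈ Finset.univ.erase ℓ, Q i = 1 - Q ℓ := by
    have := Finset.add_sum_erase Finset.univ Q (Finset.mem_univ ℓ)
    rw [hQ.2] at this
    linarith
  -- Pstar is a PMF
  have hPs_nonneg : ∀ i, 0 ≤ Pstar i := by
    intro i
    rcases eq_or_ne i ℓ with rfl | hne
    · rw [hPsl]; exact ht0
    · rw [hPsne i hne]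
      have := (hQpos i).le
      positivity
  have hPs_sum : ∑ i, Pstar i = 1 := by
    have h1 := Finset.add_sum_erase Finset.univ Pstar (Finset.mem_univ ℓ)
    have h2 : ∑ i ∈ Finset.univ.erase ℓ, Pstar i = 1 - t := by
      rw [Finset.sum_congr rfl (fun i hi => hPsne i (Finset.ne_of_mem_erase hi))]
      have h3 : ∑ i ∈ Finset.univ.erase ℓ, Q i * (1 - t) / (1 - Q ℓ)
          = (∑ i ∈ Finset.univ.erase ℓ, Q i) * ((1 - t) / (1 - Q ℓ)) := by
        rw [Finset.sum_mul]
        exact Finset.sum_congr rfl (fun i _ => by ring)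
      rw [h3, hQsum]
      field_simp
    rw [← h1, hPsl, h2]; ring
  have hPsPMF : isPMF Pstar := ⟨hPs_nonneg, hPs_sum⟩
  -- feasibility
  have hPs_feas : ∀ i, Pstar i ≤ Phat i / (1 - α) := by
    intro i
    rcases eq_or_ne i ℓ with rfl | hne
    · rw [hPsl]
    · rw [hPsne i hne]
      have hQi := hQpos i
      have hk := hsecond i hne
      have hri : Phat k / Q k * Q i ≤ Phat i := (le_div_iff₀ hQi).mp hk
      have hr2 : 1 - α - Phat ℓ ≤ (Phat k / Q k) * (1 - Q ℓ) := by linarith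
      rw [div_le_div_iff₀ hQl1' h1α]
      nlinarith [mul_nonneg (sub_nonneg.mpr hri) hQl1'.le,
        mul_nonneg hQi.le (sub_nonneg.mpr hr2)]
  -- log coefficients
  set a : ℝ := Real.log (t / Q ℓ) with ha_def
  set b : ℝ := Real.log ((1 - t) / (1 - Q ℓ)) with hb_def
  have ha0 : a ≤ 0 := Real.log_nonpos (by positivity) ((div_le_one hQl0).mpr htQ)
  have hb0 : 0 ≤ b := Real.log_nonneg ((one_le_div hQl1').mpr (by linarith))
  -- KL Pstar Q = t*a + (1-t)*b
  have hKLstar : KL Pstar Q = t * a + (1 - t) * b := by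
    unfold KL
    have h1 := Finset.add_sum_erase Finset.univ
      (fun i => Pstar i * Real.log (Pstar i / Q i)) (Finset.mem_univ ℓ)
    rw [← h1]
    show Pstar ℓ * Real.log (Pstar ℓ / Q ℓ)
        + ∑ i ∈ Finset.univ.erase ℓ, Pstar i * Real.log (Pstar i / Q i)
      = t * a + (1 - t) * b
    rw [hPsl]
    have h2 : ∀ i ∈ Finset.univ.erase ℓ,
        Pstar i * Real.log (Pstar i / Q i) = Q i * ((1 - t) / (1 - Q ℓ)) * b := by
      intro i hi
      have hne := Finset.ne_of_mem_erase hi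
      have hQi := (hQpos i).ne'
      rw [hPsne i hne]
      have : Q i * (1 - t) / (1 - Q ℓ) / Q i = (1 - t) / (1 - Q ℓ) := by
        field_simp
      rw [this, hb_def]
      ring
    rw [Finset.sum_congr rfl h2, ← Finset.sum_mul, ← Finset.sum_mul, hQsum]
    have : (1 - Q ℓ) * ((1 - t) / (1 - Q ℓ)) = 1 - t := by field_simp
    rw [this]
  -- main bound for any feasible P
  refine ⟨⟨hPsPMF, hPs_feas⟩, ?_⟩
  intro P hPpmf hPfeas
  have hPlt : P ℓ ≤ t := by rw [ht_def]; exact hPfeas ℓ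
  have hsupp : ∀ i, Pstar i = 0 → P i = 0 := by
    intro i h0
    by_cases hi : i = ℓ
    · rw [hi] at h0 ⊢
      rw [hPsl] at h0
      have h1 := hPpmf.1 ℓ
      have h2 := hPlt
      rw [h0] at h2
      linarith
    · exfalso
      rw [hPsne i hi] at h0
      have hQi := hQpos i
      have : 0 < Q i * (1 - t) / (1 - Q ℓ) := by positivity
      linarith
  have hgibbs := gibbs_aux P Pstar hPpmf hPsPMF hsupp
  -- identity
  have hPsum_e : ∑ i ∈ Finset.univ.erase ℓ, P i = 1 - P ℓ := by
    have := Finset.add_sum_erase Finset.univ P (Finset.mem_univ ℓ)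
    rw [hPpmf.2] at this
    linarith
  have hident : KL P Q = KL P Pstar + (P ℓ * a + (1 - P ℓ) * b) := by
    have hterm : ∀ i : Fin n, P i * Real.log (P i / Q i)
        = P i * Real.log (P i / Pstar i) + P i * Real.log (Pstar i / Q i) := by
      intro i
      rcases eq_or_lt_of_le (hPpmf.1 i) with h0 | hpos
      · simp [← h0]
      · have hPsipos : 0 < Pstar i := by
          by_cases hi : i = ℓ
          · rw [hi, hPsl]
            rw [hi] at hpos
            linarith
          · rw [hPsne i hi]
            have := hQpos i
            positivity
        have hQi := hQpos i
        have heq : P i / Q i = (P i / Pstar i) * (Pstar i / Q i) := by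
          field_simp
        rw [heq, Real.log_mul (by positivity) (by positivity), mul_add]
    unfold KL
    rw [Finset.sum_congr rfl (fun i _ => hterm i), Finset.sum_add_distrib]
    congr 1
    have h1 := Finset.add_sum_erase Finset.univ
      (fun i => P i * Real.log (Pstar i / Q i)) (Finset.mem_univ ℓ)
    rw [← h1]
    show P ℓ * Real.log (Pstar ℓ / Q ℓ)
        + ∑ i ∈ Finset.univ.erase ℓ, P i * Real.log (Pstar i / Q i)
      = P ℓ * a + (1 - P ℓ) * b
    have h2 : ∀ i ∈ Finset.univ.erase ℓ,
        P i * Real.log (Pstar i / Q i) = P i * b := by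
      intro i hi
      have hne := Finset.ne_of_mem_erase hi
      have hQi := (hQpos i).ne'
      rw [hPsne i hne]
      have : Q i * (1 - t) / (1 - Q ℓ) / Q i = (1 - t) / (1 - Q ℓ) := by
        field_simp
      rw [this, hb_def]
    rw [Finset.sum_congr rfl h2, ← Finset.sum_mul, hPsum_e]
    simp only [hPsl, ha_def]
  have hlin : t * a + (1 - t) * b ≤ P ℓ * a + (1 - P ℓ) * b := by
    nlinarith [mul_nonneg (sub_nonneg.mpr hPlt) (sub_nonneg.mpr (le_trans ha0 hb0))]
  constructor
  · rw [hKLstar, hident]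
    linarith [hgibbs.1]
  · intro hKL
    rw [hident, hKLstar] at hKL
    have : KL P Pstar = 0 := by linarith [hgibbs.1]
    exact hgibbs.2 this
end

section
/- For fixed α ∈ [0,1) and fixed ε ∈ (0,1), the threshold function γ(α,p) = (1/(p(1−α)))·log(1/ε) + (2n/(p(1−α)))·log(p(1−α)+1) is strictly increasing in α on [0,1) for fixed p ≥ 1, and tends to 0 as p → ∞ for fixed α; consequently α_L(p) = max{α : D*_α ≥ γ(α,p)} is non-decreasing in p and converges to κ(P̂||Q) as p → ∞, and α_L(p) ≤ κ(P̂||Q) for all p. -/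
/-- The threshold `γ(α, p)` from Proposition 1. -/
noncomputable def gammaL (n : ℕ) (ε : ℝ) (α : ℝ) (p : ℕ) : ℝ :=
  (1 / ((p : ℝ) * (1 - α))) * Real.log (1 / ε) +
    (2 * (n : ℝ) / ((p : ℝ) * (1 - α))) * Real.log ((p : ℝ) * (1 - α) + 1)

/-- `α_L(p) = max {α ∈ [0,1) : D*_α ≥ γ(α, p)}`. -/
noncomputable def alphaL {n : ℕ} (Phat Q : Fin n → ℝ) (ε : ℝ) (p : ℕ) : ℝ :=
  sSup {α : ℝ | α ∈ Set.Ico (0 : ℝ) 1 ∧ gammaL n ε α p ≤ Dstar Phat Q α}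

/-! ### Auxiliary lemmas about the core of `gammaL` -/

/-- The core of `gammaL` as a function of `t = p (1 - α)`. -/
noncomputable def gcore (n : ℕ) (ε : ℝ) (t : ℝ) : ℝ :=
  Real.log (1/ε) / t + 2*(n:ℝ) * (Real.log (t+1) / t)

lemma gammaL_eq_gcore (n : ℕ) (ε α : ℝ) (p : ℕ) :
    gammaL n ε α p = gcore n ε ((p:ℝ) * (1 - α)) := by
  unfold gammaL gcore; ring

lemma gcore_pos {n : ℕ} {ε t : ℝ} (hε0 : 0 < ε) (hε1 : ε < 1) (ht : 0 < t) :
    0 < gcore n ε t := by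
  have h1 : 0 < Real.log (1/ε) := Real.log_pos ((one_lt_div hε0).2 hε1)
  have h2 : 0 ≤ Real.log (t+1) := Real.log_nonneg (by linarith)
  have h3 : 0 ≤ 2*(n:ℝ) * (Real.log (t+1) / t) := by positivity
  have h4 : 0 < Real.log (1/ε) / t := by positivity
  unfold gcore; linarith

lemma log_div_strictAnti {s t : ℝ} (hs : 0 < s) (hst : s < t) :
    Real.log (t+1) / t < Real.log (s+1) / s := by
  have ht : 0 < t := hs.trans hst
  have key := strictConcaveOn_log_Ioi.2 (Set.mem_Ioi.2 one_pos)
      (Set.mem_Ioi.2 (by linarith : (0:ℝ) < 1 + t)) (by linarith : (1:ℝ) ≠ 1 + t)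
      (show (0:ℝ) < 1 - s/t by
        have : s/t < 1 := (div_lt_one ht).2 hst; linarith)
      (show (0:ℝ) < s/t by positivity) (show (1 - s/t) + s/t = 1 by ring)
  have hab : (1 - s/t) • (1:ℝ) + (s/t) • (1+t) = 1 + s := by
    simp only [smul_eq_mul]; field_simp; ring
  rw [hab, Real.log_one, smul_eq_mul, smul_eq_mul, mul_zero, zero_add] at key
  rw [div_lt_div_iff₀ ht hs]
  have h2 := mul_lt_mul_of_pos_left key ht
  have h3 : t * (s/t * Real.log (1+t)) = Real.log (1+t) * s := by
    field_simp
  rw [h3] at h2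
  calc Real.log (t+1) * s = Real.log (1+t) * s := by rw [add_comm]
    _ < t * Real.log (1+s) := h2
    _ = Real.log (s+1) * t := by rw [add_comm s 1]; ring

lemma gcore_anti {n : ℕ} {ε s t : ℝ} (hε0 : 0 < ε) (hε1 : ε < 1)
    (hs : 0 < s) (hst : s < t) : gcore n ε t < gcore n ε s := by
  have h1 : 0 < Real.log (1/ε) := Real.log_pos ((one_lt_div hε0).2 hε1)
  have h2 : Real.log (1/ε) / t < Real.log (1/ε) / s :=
    div_lt_div_of_pos_left h1 hs hst
  have h3 : Real.log (t+1) / t < Real.log (s+1) / s := log_div_strictAnti hs hst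
  have h4 : 2*(n:ℝ) * (Real.log (t+1) / t) ≤ 2*(n:ℝ) * (Real.log (s+1) / s) :=
    mul_le_mul_of_nonneg_left h3.le (by positivity)
  unfold gcore; linarith

lemma gcore_anti_le {n : ℕ} {ε s t : ℝ} (hε0 : 0 < ε) (hε1 : ε < 1)
    (hs : 0 < s) (hst : s ≤ t) : gcore n ε t ≤ gcore n ε s := by
  rcases hst.eq_or_lt with rfl | h
  · exact le_refl _
  · exact (gcore_anti hε0 hε1 hs h).le

lemma gcore_tendsto {n : ℕ} {ε c : ℝ} (hc : 0 < c) :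
    Filter.Tendsto (fun p : ℕ => gcore n ε ((p:ℝ) * c)) Filter.atTop (nhds 0) := by
  have hpc : Filter.Tendsto (fun p : ℕ => (p:ℝ) * c) Filter.atTop Filter.atTop :=
    tendsto_natCast_atTop_atTop.atTop_mul_const hc
  have h1 : Filter.Tendsto (fun p : ℕ => Real.log (1/ε) / ((p:ℝ)*c)) Filter.atTop (nhds 0) := by
    have h := (tendsto_inv_atTop_zero.comp hpc).const_mul (Real.log (1/ε))
    rw [mul_zero] at h
    simpa only [Function.comp_def, div_eq_mul_inv] using h
  have h2 : Filter.Tendsto (fun p : ℕ => Real.log ((p:ℝ)*c + 1) / ((p:ℝ)*c))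
      Filter.atTop (nhds 0) := by
    have base := Real.tendsto_pow_log_div_mul_add_atTop 1 (-1) 1 one_ne_zero
    have hpc1 : Filter.Tendsto (fun p : ℕ => (p:ℝ)*c + 1) Filter.atTop Filter.atTop :=
      Filter.tendsto_atTop_add_const_right _ 1 hpc
    have h := base.comp hpc1
    simp only [Function.comp_def, pow_one, one_mul] at h
    convert h using 2 with p
    ring
  have h := h1.add ((h2.const_mul (2*(n:ℝ))))
  simpa [gcore] using h

/-! ### Auxiliary lemmas about `Dstar` -/

lemma klterm_le {x q : ℝ} (hx : 0 ≤ x) (hq : 0 < q) : x - q ≤ x * Real.log (x / q) := by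
  rcases eq_or_ne x q with rfl | hne
  · rw [div_self hq.ne', Real.log_one, mul_zero]; linarith
  rcases hx.eq_or_lt with rfl | hx'
  · simp [Real.log_zero]; linarith
  · have hlog : Real.log (q/x) < q/x - 1 :=
      Real.log_lt_sub_one_of_pos (by positivity) (by
        intro h
        exact hne ((div_eq_one_iff_eq hx'.ne').1 h).symm)
    have hinv : Real.log (q/x) = - Real.log (x/q) := by
      rw [← Real.log_inv]; congr 1; field_simp
    rw [hinv] at hlog
    have h2 : 1 - q/x < Real.log (x/q) := by linarith
    have h3 := mul_lt_mul_of_pos_left h2 hx'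
    have h4 : x * (1 - q/x) = x - q := by field_simp
    linarith

lemma klterm_lt {x q : ℝ} (hx : 0 ≤ x) (hq : 0 < q) (hne : x ≠ q) :
    x - q < x * Real.log (x / q) := by
  rcases hx.eq_or_lt with rfl | hx'
  · simp [Real.log_zero]; linarith
  · have hlog : Real.log (q/x) < q/x - 1 :=
      Real.log_lt_sub_one_of_pos (by positivity) (by
        intro h
        exact hne ((div_eq_one_iff_eq hx'.ne').1 h).symm)
    have hinv : Real.log (q/x) = - Real.log (x/q) := by
      rw [← Real.log_inv]; congr 1; field_simp
    rw [hinv] at hlog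
    have h2 : 1 - q/x < Real.log (x/q) := by linarith
    have h3 := mul_lt_mul_of_pos_left h2 hx'
    have h4 : x * (1 - q/x) = x - q := by field_simp
    linarith

/-- Strict Gibbs inequality for finite distributions. -/
lemma gibbs_pos {n : ℕ} {P Q : Fin n → ℝ} (hP0 : ∀ i, 0 ≤ P i) (hQ0 : ∀ i, 0 < Q i)
    (hPs : ∑ i, P i = 1) (hQs : ∑ i, Q i = 1) {i0 : Fin n} (hne : P i0 ≠ Q i0) :
    0 < KL P Q := by
  have key : ∑ i, (P i - Q i) < ∑ i, P i * Real.log (P i / Q i) :=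
    Finset.sum_lt_sum (fun i _ => klterm_le (hP0 i) (hQ0 i))
      ⟨i0, Finset.mem_univ _, klterm_lt (hP0 i0) (hQ0 i0) hne⟩
  have : ∑ i, (P i - Q i) = 0 := by
    rw [Finset.sum_sub_distrib, hPs, hQs, sub_self]
  unfold KL; linarith

lemma KL_self {n : ℕ} {Q : Fin n → ℝ} (hQ0 : ∀ i, 0 < Q i) : KL Q Q = 0 := by
  unfold KL
  apply Finset.sum_eq_zero
  intro i _
  rw [div_self (hQ0 i).ne', Real.log_one, mul_zero]

lemma KL_continuous {n : ℕ} {Q : Fin n → ℝ} (hQ0 : ∀ i, 0 < Q i) :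
    Continuous (fun P : Fin n → ℝ => KL P Q) := by
  have heq : (fun P : Fin n → ℝ => KL P Q)
      = fun P => ∑ i, (P i * Real.log (P i) - P i * Real.log (Q i)) := by
    funext P
    refine Finset.sum_congr rfl fun i _ => ?_
    rcases eq_or_ne (P i) 0 with h | h
    · simp [h]
    · rw [Real.log_div h (hQ0 i).ne']; ring
  rw [heq]
  refine continuous_finset_sum _ fun i _ => ?_
  exact (Real.continuous_mul_log.comp (continuous_apply i)).sub
    ((continuous_apply i).mul continuous_const)

/-- `D*_α > 0` strictly below the separation distance. -/
lemma Dstar_pos {n : ℕ} [NeZero n] {Phat Q : Fin n → ℝ} {α : ℝ}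
    (hP : isPMF Phat) (hQ : isPMF Q) (hQpos : ∀ i, 0 < Q i)
    (hα0 : 0 ≤ α) (hακ : α < sepDist Phat Q) (hκ1 : sepDist Phat Q < 1) :
    0 < Dstar Phat Q α := by
  have hα1 : α < 1 := hακ.trans hκ1
  have h1α : 0 < 1 - α := by linarith
  set K := {P : Fin n → ℝ | isPMF P ∧ ∀ i, P i ≤ Phat i / (1 - α)} with hK
  have hPhatK : Phat ∈ K := by
    refine ⟨hP, fun i => ?_⟩
    rw [le_div_iff₀ h1α]
    nlinarith [hP.1 i]
  have hclosed : IsClosed K := by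
    have : K = ({P : Fin n → ℝ | ∑ i, P i = 1} ∩ ⋂ i, {P | 0 ≤ P i})
        ∩ ⋂ i, {P : Fin n → ℝ | P i ≤ Phat i / (1 - α)} := by
      ext P
      simp only [hK, Set.mem_setOf_eq, Set.mem_inter_iff, Set.mem_iInter, isPMF]
      tauto
    rw [this]
    refine IsClosed.inter (IsClosed.inter ?_ (isClosed_iInter fun i => ?_))
      (isClosed_iInter fun i => ?_)
    · exact isClosed_eq (continuous_finset_sum _ fun i _ => continuous_apply i)
        continuous_const
    · exact isClosed_le continuous_const (continuous_apply i)
    · exact isClosed_le (continuous_apply i) continuous_const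
  have hcompact : IsCompact K := by
    refine IsCompact.of_isClosed_subset (isCompact_Icc
      (a := (fun _ => 0 : Fin n → ℝ)) (b := fun i => Phat i / (1 - α))) hclosed ?_
    intro P hPK
    exact Set.mem_Icc.2 ⟨fun i => hPK.1.1 i, fun i => hPK.2 i⟩
  obtain ⟨P0, hP0K, hmin⟩ := hcompact.exists_isMinOn ⟨Phat, hPhatK⟩
    (KL_continuous hQpos).continuousOn
  obtain ⟨i0, _, hi0⟩ := Finset.exists_mem_eq_sup' (Finset.univ_nonempty)
    (fun i => 1 - Phat i / Q i)
  have hQi : 0 < Q i0 := hQpos i0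
  have hlt : Phat i0 / (1 - α) < Q i0 := by
    have : α < 1 - Phat i0 / Q i0 := by rw [← hi0]; exact hακ
    rw [div_lt_iff₀ h1α]
    have h2 : Phat i0 / Q i0 < 1 - α := by linarith
    calc Phat i0 = (Phat i0 / Q i0) * Q i0 := by field_simp
      _ < (1 - α) * Q i0 := mul_lt_mul_of_pos_right h2 hQi
      _ = Q i0 * (1 - α) := by ring
  have hP0ne : P0 i0 ≠ Q i0 := by
    have := hP0K.2 i0
    intro h; rw [h] at this; linarith
  have hpos : 0 < KL P0 Q := gibbs_pos hP0K.1.1 hQpos hP0K.1.2 hQ.2 hP0ne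
  have : KL P0 Q ≤ Dstar Phat Q α := by
    refine le_csInf ⟨KL Phat Q, Phat, hPhatK, rfl⟩ ?_
    rintro b ⟨P, hPK, rfl⟩
    exact hmin hPK
  linarith

/-- `D*_α ≤ 0` above the separation distance. -/
lemma Dstar_nonpos {n : ℕ} [NeZero n] {Phat Q : Fin n → ℝ} {α : ℝ}
    (hQ : isPMF Q) (hQpos : ∀ i, 0 < Q i)
    (hκα : sepDist Phat Q ≤ α) (hα1 : α < 1) :
    Dstar Phat Q α ≤ 0 := by
  have h1α : 0 < 1 - α := by linarith
  have hQK : Q ∈ {P : Fin n → ℝ | isPMF P ∧ ∀ i, P i ≤ Phat i / (1 - α)} := by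
    refine ⟨hQ, fun i => ?_⟩
    have hsup : 1 - Phat i / Q i ≤ sepDist Phat Q :=
      Finset.le_sup' (fun i => 1 - Phat i / Q i) (Finset.mem_univ i)
    have h2 : 1 - α ≤ Phat i / Q i := by linarith
    rw [le_div_iff₀ h1α]
    calc Q i * (1 - α) ≤ Q i * (Phat i / Q i) :=
          mul_le_mul_of_nonneg_left h2 (hQpos i).le
      _ = Phat i := by rw [mul_comm, div_mul_cancel₀ _ (hQpos i).ne']
  have hmem : (0:ℝ) ∈ (fun P => KL P Q) ''
      {P : Fin n → ℝ | isPMF P ∧ ∀ i, P i ≤ Phat i / (1 - α)} :=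
    ⟨Q, hQK, KL_self hQpos⟩
  by_cases hbdd : BddBelow ((fun P => KL P Q) ''
      {P : Fin n → ℝ | isPMF P ∧ ∀ i, P i ≤ Phat i / (1 - α)})
  · exact csInf_le hbdd hmem
  · rw [Dstar, Real.sInf_of_not_bddBelow hbdd]

theorem gamma_and_alphaL_asymptotics {n : ℕ} [NeZero n] (Phat Q : Fin n → ℝ) (ε : ℝ)
    (hP : isPMF Phat) (hQ : isPMF Q) (hQpos : ∀ i, 0 < Q i)
    (hε0 : 0 < ε) (hε1 : ε < 1)
    (hκ0 : 0 < sepDist Phat Q) (hκ1 : sepDist Phat Q < 1) :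
    (∀ p : ℕ, 1 ≤ p → StrictMonoOn (fun α => gammaL n ε α p) (Set.Ico (0 : ℝ) 1)) ∧
      (∀ α : ℝ, α ∈ Set.Ico (0 : ℝ) 1 →
        Filter.Tendsto (fun p : ℕ => gammaL n ε α p) Filter.atTop (nhds 0)) ∧
      (∀ p q : ℕ, 1 ≤ p → p ≤ q → alphaL Phat Q ε p ≤ alphaL Phat Q ε q) ∧
      Filter.Tendsto (fun p : ℕ => alphaL Phat Q ε p) Filter.atTop
        (nhds (sepDist Phat Q)) ∧
      (∀ p : ℕ, 1 ≤ p → alphaL Phat Q ε p ≤ sepDist Phat Q) := by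
  set κ := sepDist Phat Q with hκ
  -- the defining set of alphaL
  have hS : ∀ p : ℕ, {α : ℝ | α ∈ Set.Ico (0 : ℝ) 1 ∧ gammaL n ε α p ≤ Dstar Phat Q α}
      ⊆ Set.Ico (0:ℝ) 1 := fun p α hα => hα.1
  have hbddS : ∀ p : ℕ, BddAbove
      {α : ℝ | α ∈ Set.Ico (0 : ℝ) 1 ∧ gammaL n ε α p ≤ Dstar Phat Q α} :=
    fun p => ⟨1, fun α hα => (hα.1.2).le⟩
  -- Part 5 first (needed in part 4)
  have part5 : ∀ p : ℕ, 1 ≤ p → alphaL Phat Q ε p ≤ κ := by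
    intro p hp
    apply Real.sSup_le _ hκ0.le
    rintro α ⟨⟨hα0, hα1⟩, hγ⟩
    by_contra hcon
    push_neg at hcon
    have hD : Dstar Phat Q α ≤ 0 := Dstar_nonpos hQ hQpos hcon.le hα1
    have ht : 0 < (p:ℝ) * (1 - α) := by
      have : (1:ℝ) ≤ (p:ℝ) := by exact_mod_cast hp
      nlinarith
    have hγpos : 0 < gammaL n ε α p := by
      rw [gammaL_eq_gcore]; exact gcore_pos hε0 hε1 ht
    linarith
  -- Part 1
  have part1 : ∀ p : ℕ, 1 ≤ p → StrictMonoOn (fun α => gammaL n ε α p) (Set.Ico (0 : ℝ) 1) := by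
    intro p hp α1 hα1 α2 hα2 h12
    have hp1 : (1:ℝ) ≤ (p:ℝ) := by exact_mod_cast hp
    simp only [gammaL_eq_gcore]
    have ht2 : 0 < (p:ℝ) * (1 - α2) := by
      have := hα2.2; nlinarith
    have hlt : (p:ℝ) * (1 - α2) < (p:ℝ) * (1 - α1) := by nlinarith
    exact gcore_anti hε0 hε1 ht2 hlt
  -- Part 2
  have part2 : ∀ α : ℝ, α ∈ Set.Ico (0 : ℝ) 1 →
      Filter.Tendsto (fun p : ℕ => gammaL n ε α p) Filter.atTop (nhds 0) := by
    intro α hα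
    have hc : 0 < 1 - α := by have := hα.2; linarith
    simpa only [gammaL_eq_gcore] using gcore_tendsto (n := n) (ε := ε) hc
  -- Part 3
  have part3 : ∀ p q : ℕ, 1 ≤ p → p ≤ q → alphaL Phat Q ε p ≤ alphaL Phat Q ε q := by
    intro p q hp hpq
    apply Real.sSup_le
    · rintro α ⟨⟨hα0, hα1⟩, hγ⟩
      have hp1 : (1:ℝ) ≤ (p:ℝ) := by exact_mod_cast hp
      have hqp : (p:ℝ) ≤ (q:ℝ) := by exact_mod_cast hpq
      have htp : 0 < (p:ℝ) * (1 - α) := by nlinarith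
      have htpq : (p:ℝ) * (1 - α) ≤ (q:ℝ) * (1 - α) := by nlinarith
      have hγq : gammaL n ε α q ≤ gammaL n ε α p := by
        rw [gammaL_eq_gcore, gammaL_eq_gcore]
        exact gcore_anti_le hε0 hε1 htp htpq
      exact le_csSup (hbddS q) ⟨⟨hα0, hα1⟩, hγq.trans hγ⟩
    · apply Real.sSup_nonneg
      rintro α ⟨⟨hα0, _⟩, _⟩
      exact hα0
  refine ⟨part1, part2, part3, ?_, part5⟩
  -- Part 4
  rw [tendsto_order]
  constructor
  · intro a ha
    set α0 : ℝ := max ((a + κ)/2) (κ/2) with hα0def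
    have hα0κ : α0 < κ := max_lt (by linarith) (by linarith)
    have hα0nonneg : 0 ≤ α0 := le_trans (by linarith) (le_max_right _ _)
    have haα0 : a < α0 := lt_of_lt_of_le (by linarith) (le_max_left _ _)
    have hα01 : α0 < 1 := hα0κ.trans hκ1
    have hD : 0 < Dstar Phat Q α0 := Dstar_pos hP hQ hQpos hα0nonneg hα0κ hκ1
    have htend := part2 α0 ⟨hα0nonneg, hα01⟩
    filter_upwards [htend.eventually_lt_const hD] with p hγ
    have hmem : α0 ∈ {α : ℝ | α ∈ Set.Ico (0 : ℝ) 1 ∧ gammaL n ε α p ≤ Dstar Phat Q α} :=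
      ⟨⟨hα0nonneg, hα01⟩, hγ.le⟩
    exact lt_of_lt_of_le haα0 (le_csSup (hbddS p) hmem)
  · intro a ha
    filter_upwards [Filter.eventually_ge_atTop 1] with p hp
    exact lt_of_le_of_lt (part5 p hp) ha
end
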